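/- Let X and Y be metrizable topological spaces without isolated points, and let f : X → Y be a local homeomorphism which is a closed map (it maps closed subsets of X to closed subsets of Y). Then f is a proper map. -/
import Mathlib

open Metric Set Filter Topology

/-- A closed local homeomorphism between metrizable spaces without isolated points
is a proper map. -/
theorem proper_of_closed_localHomeo {X Y : Type*} [TopologicalSpace X] [TopologicalSpace Y]
    [TopologicalSpace.MetrizableSpace X] [TopologicalSpace.MetrizableSpace Y]
    (hX : ∀ x : X, ¬ IsOpen ({x} : Set X)) (hY : ∀ y : Y, ¬ IsOpen ({y} : Set Y))
    (f : X → Y) (hf : IsLocalHomeomorph f)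
    (hclosed : ∀ C : Set X, IsClosed C → IsClosed (f '' C)) :
    Continuous f ∧ ∀ K : Set Y, IsCompact K → IsCompact (f ⁻¹' K) := by
  have hcont : Continuous f := hf.continuous
  refine ⟨hcont, ?_⟩
  letI : MetricSpace X := TopologicalSpace.metrizableSpaceMetric X
  letI : MetricSpace Y := TopologicalSpace.metrizableSpaceMetric Y
  -- punctured neighborhoods in X are nontrivial
  have hne : ∀ x₀ : X, ∀ s ∈ 𝓝 x₀, ∃ w ∈ s, w ≠ x₀ := by
    intro x₀ s hs
    have hnb : Filter.NeBot (𝓝[≠] x₀) :=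
      ⟨fun h => hX x₀ ((isOpen_singleton_iff_punctured_nhds x₀).mpr h)⟩
    haveI := hnb
    obtain ⟨w, hws, hw⟩ := Filter.nonempty_of_mem
      (inter_mem (nhdsWithin_le_nhds (s := {x₀}ᶜ) hs) self_mem_nhdsWithin)
    exact ⟨w, hws, hw⟩
  -- Main claim: all fibers are finite.
  have key : ∀ y : Y, (f ⁻¹' {y}).Finite := by
    intro y
    by_contra hinf
    replace hinf : (f ⁻¹' {y}).Infinite := hinf
    obtain u := Set.Infinite.natEmbedding _ hinf
    set x : ℕ → X := fun n => (u n : X) with hxdef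
    have hxy : ∀ n, f (x n) = y := fun n => (u n).2
    have hxinj : Function.Injective x := fun a b h =>
      u.injective (Subtype.ext h)
    -- choose z n close to x n with f (z n) close to y but ≠ y
    have hzex : ∀ n : ℕ, ∃ z : X,
        dist z (x n) < 1 / (n + 1) ∧ dist (f z) y < 1 / (n + 1) ∧ f z ≠ y := by
      intro n
      have hpos : (0 : ℝ) < 1 / (n + 1) := by positivity
      obtain ⟨e, hxe, hfe⟩ := hf (x n)
      have h1 : e.source ∈ 𝓝 (x n) := e.open_source.mem_nhds hxe
      have h2 : ball (x n) (1 / (n + 1)) ∈ 𝓝 (x n) := ball_mem_nhds _ hpos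
      have h3 : f ⁻¹' ball y (1 / (n + 1)) ∈ 𝓝 (x n) :=
        (isOpen_ball.preimage hcont).mem_nhds (by
          simp only [Set.mem_preimage, hxy n, mem_ball, dist_self]
          positivity)
      obtain ⟨z, hz, hzx⟩ := hne (x n) _ (inter_mem (inter_mem h1 h2) h3)
      refine ⟨z, mem_ball.mp hz.1.2, hz.2, fun h => hzx ?_⟩
      apply e.injOn hz.1.1 hxe
      rw [← hfe, h, hxy n]
    choose z hz1 hz2 hz3 using hzex
    set C := Set.range z with hCdef
    -- key approximation property of limit points of C not in C
    have star : ∀ w, w ∈ closure C → w ∉ C →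
        ∀ ε > (0 : ℝ), ∀ N : ℕ, ∃ n ≥ N, dist (z n) w < ε := by
      intro w hw hwc ε hε N
      have hfin : (z '' Set.Iio N).Finite := (Set.finite_Iio N).image z
      have hwnotin : w ∈ (z '' Set.Iio N)ᶜ := fun hmem => by
        obtain ⟨n, _, rfl⟩ := hmem
        exact hwc ⟨n, rfl⟩
      have hmem : ball w ε ∩ (z '' Set.Iio N)ᶜ ∈ 𝓝 w :=
        inter_mem (ball_mem_nhds _ hε) (hfin.isClosed.isOpen_compl.mem_nhds hwnotin)
      obtain ⟨v, hv1, hv2⟩ := mem_closure_iff_nhds.mp hw _ hmem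
      obtain ⟨n, rfl⟩ := hv2
      refine ⟨n, ?_, by simpa [dist_comm] using mem_ball.mp hv1.1⟩
      by_contra hn
      exact hv1.2 ⟨n, Set.mem_Iio.mpr (by omega), rfl⟩
    -- C is closed
    have hCclosed : IsClosed C := by
      apply isClosed_of_closure_subset
      intro w hw
      by_contra hwc
      -- step 1: f w = y
      have hfw : f w = y := by
        by_contra hfwy
        have hd : (0 : ℝ) < dist (f w) y := dist_pos.mpr hfwy
        obtain ⟨δ, hδ, hδ'⟩ := Metric.continuousAt_iff.mp (hcont.continuousAt (x := w))
          (dist (f w) y / 2) (by linarith)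
        obtain ⟨N, hN⟩ := exists_nat_one_div_lt (show (0:ℝ) < dist (f w) y / 2 by linarith)
        obtain ⟨n, hnN, hdz⟩ := star w hw hwc δ hδ N
        have h1 : dist (f (z n)) (f w) < dist (f w) y / 2 := hδ' hdz
        have h2 : (1 : ℝ) / (n + 1) ≤ 1 / (N + 1) := by
          apply one_div_le_one_div_of_le (by positivity)
          have : (N : ℝ) ≤ n := by exact_mod_cast hnN
          linarith
        have := dist_triangle (f w) (f (z n)) y
        rw [dist_comm (f w) (f (z n))] at this
        have h3 := hz2 n
        linarith
      -- step 2: use local injectivity at w to derive a contradiction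
      obtain ⟨e, hwe, hfe⟩ := hf w
      obtain ⟨ε, hε, hball⟩ := Metric.isOpen_iff.mp e.open_source w hwe
      have get : ∀ N : ℕ, ∃ n ≥ N, x n = w := by
        intro N
        obtain ⟨N', hN'⟩ := exists_nat_one_div_lt (show (0:ℝ) < ε / 2 by linarith)
        obtain ⟨n, hnN, hdz⟩ := star w hw hwc (ε / 2) (by linarith) (max N N')
        have h2 : (1 : ℝ) / (n + 1) ≤ 1 / (N' + 1) := by
          apply one_div_le_one_div_of_le (by positivity)
          have : (N' : ℝ) ≤ n := by exact_mod_cast le_trans (le_max_right N N') hnN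
          linarith
        have hxw : dist (x n) w < ε := by
          have := dist_triangle (x n) (z n) w
          have h1 : dist (x n) (z n) < 1 / (n + 1) := by
            rw [dist_comm]; exact hz1 n
          linarith
        have hxe' : x n ∈ e.source := hball hxw
        refine ⟨n, le_trans (le_max_left N N') hnN, e.injOn hxe' hwe ?_⟩
        rw [← hfe, hxy n, hfw]
      obtain ⟨n1, _, h1⟩ := get 0
      obtain ⟨n2, hn2, h2⟩ := get (n1 + 1)
      exact absurd (hxinj (h1.trans h2.symm)) (by omega)
    -- f '' C is closed, contains points f (z n) → y, but y ∉ f '' C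
    have h1 : IsClosed (f '' C) := hclosed C hCclosed
    have h2 : y ∈ closure (f '' C) := by
      rw [Metric.mem_closure_iff]
      intro ε hε
      obtain ⟨N, hN⟩ := exists_nat_one_div_lt hε
      exact ⟨f (z N), ⟨z N, ⟨N, rfl⟩, rfl⟩, by
        rw [dist_comm]; exact lt_trans (hz2 N) hN⟩
    rw [h1.closure_eq] at h2
    obtain ⟨c, ⟨n, rfl⟩, hc⟩ := h2
    exact hz3 n hc
  -- conclude properness
  intro K hK
  have hproper : IsProperMap f :=
    isProperMap_iff_isClosedMap_and_compact_fibers.mpr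
      ⟨hcont, fun C hC => hclosed C hC, fun y => (key y).isCompact⟩
  exact hproper.isCompact_preimage hK
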